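/- Let (X,d) be a metric space, let S ⊆ X be a compact subset, and let D ⊆ S be a nonempty compact subset which is a union of connected components of S, i.e., for every x ∈ D the connected component of x in S is contained in D. Then for every δ > 0 there exists an open set V ⊆ X such that D ⊆ V, every point of V lies at distance strictly less than δ from D, and S ∩ ∂V = ∅, where ∂V denotes the topological frontier of V. -/

import Mathlib

open Set Metric Filter Topology

/-- In a compact Hausdorff space, any open set containing a connected component
contains a clopen set containing the point. -/
lemma exists_isClopen_of_connectedComponent_subset {Y : Type*} [TopologicalSpace Y]
    [CompactSpace Y] [T2Space Y] {x : Y} {U : Set Y} (hU : IsOpen U)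
    (h : connectedComponent x ⊆ U) : ∃ Z : Set Y, IsClopen Z ∧ x ∈ Z ∧ Z ⊆ U := by
  let N := { s : Set Y // IsClopen s ∧ x ∈ s }
  haveI : Nonempty N := ⟨⟨univ, isClopen_univ, mem_univ x⟩⟩
  have hNcl : ∀ s : N, IsClosed s.val := fun s => s.property.1.1
  have hdir : Directed ((· ⊇ ·) : Set Y → Set Y → Prop) fun s : N => s.val := by
    rintro ⟨s, hs, hxs⟩ ⟨t, ht, hxt⟩
    exact ⟨⟨s ∩ t, hs.inter ht, ⟨hxs, hxt⟩⟩, inter_subset_left, inter_subset_right⟩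
  have hx : (⋂ s : N, s.val) = connectedComponent x :=
    (connectedComponent_eq_iInter_isClopen x).symm
  have h_nhd : ∀ y ∈ ⋂ s : N, s.val, U ∈ 𝓝 y := fun y hy => by
    rw [hx] at hy
    exact hU.mem_nhds (h hy)
  obtain ⟨⟨s, hs, hxs⟩, hsU⟩ := exists_subset_nhds_of_compactSpace hdir hNcl h_nhd
  exact ⟨s, hs, hxs, hsU⟩

/-- Existence of open isolating neighborhoods: if `S` is a compact subset of a metric
space `X` and `D ⊆ S` is a nonempty compact set which is a union of connected
components of `S`, then for every `δ > 0` there is an open set `V` with `D ⊆ V`,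
every point of `V` at distance `< δ` from `D`, and `S ∩ ∂V = ∅`. -/
theorem exists_open_isolating_neighborhood {X : Type*} [MetricSpace X]
    (S D : Set X) (hS : IsCompact S) (hD : IsCompact D) (hDne : D.Nonempty)
    (hDS : D ⊆ S)
    (hcomp : ∀ x ∈ D, connectedComponentIn S x ⊆ D)
    {δ : ℝ} (hδ : 0 < δ) :
    ∃ V : Set X, IsOpen V ∧ D ⊆ V ∧ (∀ x ∈ V, Metric.infDist x D < δ) ∧
      S ∩ frontier V = ∅ := by
  haveI : CompactSpace S := isCompact_iff_compactSpace.1 hS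
  -- Work in the subspace S.
  set D' : Set S := Subtype.val ⁻¹' D with hD'def
  have hD'cpt : IsCompact D' :=
    (hD.isClosed.preimage continuous_subtype_val).isCompact
  set N' : Set S := Subtype.val ⁻¹' (thickening (δ/2) D) with hN'def
  have hN'open : IsOpen N' := (isOpen_thickening).preimage continuous_subtype_val
  have hD'N' : D' ⊆ N' := fun x hx => self_subset_thickening (by linarith) D hx
  -- For each x ∈ D', find a clopen Z ∋ x with Z ⊆ N'.
  have key : ∀ x ∈ D', ∃ Z : Set S, IsClopen Z ∧ x ∈ Z ∧ Z ⊆ N' := by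
    intro x hx
    apply exists_isClopen_of_connectedComponent_subset hN'open
    have h1 : connectedComponent x ⊆ D' := by
      intro y hy
      have : (y : X) ∈ connectedComponentIn S (x : X) := by
        rw [connectedComponentIn_eq_image x.2]
        exact ⟨y, by simpa using hy, rfl⟩
      exact hcomp _ hx this
    exact h1.trans hD'N'
  choose! Z hZclopen hZmem hZsub using key
  -- Cover D' by finitely many such clopens.
  obtain ⟨t, htsub, htfin, htcov⟩ := hD'cpt.elim_finite_subcover_image
    (fun x hx => (hZclopen x hx).2) (fun y hy => mem_biUnion hy (hZmem y hy))
  set U' : Set S := ⋃ x ∈ t, Z x with hU'def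
  have hU'clopen : IsClopen U' := by
    apply Set.Finite.isClopen_biUnion htfin
    intro x hx
    exact hZclopen x (htsub hx)
  have hU'N' : U' ⊆ N' := by
    apply Set.iUnion₂_subset
    intro x hx
    exact hZsub x (htsub hx)
  have hD'U' : D' ⊆ U' := htcov
  -- Push forward to X.
  set U : Set X := Subtype.val '' U' with hUdef
  have hUcpt : IsCompact U := (hU'clopen.1.isCompact).image continuous_subtype_val
  have hDU : D ⊆ U := fun d hd => ⟨⟨d, hDS hd⟩, hD'U' hd, rfl⟩
  have hUthick : U ⊆ thickening (δ/2) D := by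
    rintro _ ⟨y, hy, rfl⟩
    exact hU'N' hy
  have hSU_closed : IsClosed (S \ U) := by
    have : S \ U = Subtype.val '' (U'ᶜ) := by
      ext z
      constructor
      · rintro ⟨hzS, hzU⟩
        exact ⟨⟨z, hzS⟩, fun h => hzU ⟨⟨z, hzS⟩, h, rfl⟩, rfl⟩
      · rintro ⟨⟨z, hzS⟩, hz, rfl⟩
        refine ⟨hzS, fun ⟨w, hw, hwz⟩ => hz ?_⟩
        have : w = ⟨z, hzS⟩ := Subtype.ext hwz
        rwa [this] at hw
    rw [this]
    exact ((hU'clopen.2.isClosed_compl.isCompact).image continuous_subtype_val).isClosed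
  have hdisj : Disjoint U (S \ U) := disjoint_sdiff_right.mono_left le_rfl
  obtain ⟨r0, hr0, hr0disj⟩ := hdisj.exists_thickenings hUcpt hSU_closed
  set r : ℝ := min (r0/2) (δ/4) with hrdef
  have hr : 0 < r := lt_min (by linarith) (by linarith)
  refine ⟨thickening r U, isOpen_thickening, hDU.trans (self_subset_thickening hr U), ?_, ?_⟩
  · intro x hx
    obtain ⟨y, hy, hxy⟩ := mem_thickening_iff.1 hx
    obtain ⟨z, hz, hyz⟩ := mem_thickening_iff.1 (hUthick hy)
    calc infDist x D ≤ dist x z := infDist_le_dist_of_mem hz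
      _ ≤ dist x y + dist y z := dist_triangle x y z
      _ < r + δ/2 := by linarith
      _ ≤ δ/4 + δ/2 := by have := min_le_right (r0/2) (δ/4); linarith
      _ < δ := by linarith
  · rw [Set.eq_empty_iff_forall_notMem]
    rintro x ⟨hxS, hxfr⟩
    have hxcl : x ∈ closure (thickening r U) := hxfr.1
    have hxnot : x ∉ thickening r U := by
      intro h
      exact hxfr.2 (by rwa [isOpen_thickening.interior_eq])
    have hxU : x ∉ U := fun h => hxnot (self_subset_thickening hr U h)
    have hx1 : x ∈ thickening r0 U := by
      have h1 : x ∈ cthickening r U := closure_thickening_subset_cthickening r U hxcl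
      exact cthickening_subset_thickening' hr0 (lt_of_le_of_lt (min_le_left _ _) (by linarith)) U h1
    have hx2 : x ∈ thickening r0 (S \ U) :=
      self_subset_thickening hr0 _ ⟨hxS, hxU⟩
    exact Set.disjoint_left.1 hr0disj hx1 hx2
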